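/- Let Λ ∈ L₊↑ and a ∈ ℝ⁴ be such that the Poincaré transformation g(x) = Λx + a maps the standard wedge W₀ onto itself, i.e. {Λx + a : x ∈ W₀} = W₀. Then a₀ = a₁ = 0, Λ commutes with every standard boost, Λ ∘ Λ₀(t) = Λ₀(t) ∘ Λ for all t ∈ ℝ, and Λ commutes with the reflection, Λ ∘ j₀ = j₀ ∘ Λ. Consequently g commutes with Λ₀(t) and with j₀ as affine maps of ℝ⁴. -/

import Mathlib

noncomputable section

open Matrix

/-- The Minkowski bilinear form on ℝ⁴. -/
def mink (x y : Fin 4 → ℝ) : ℝ := x 0 * y 0 - x 1 * y 1 - x 2 * y 2 - x 3 * y 3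

/-- The Minkowski metric matrix η = diag(1,−1,−1,−1). -/
def eta : Matrix (Fin 4) (Fin 4) ℝ :=
  !![1, 0, 0, 0;
     0, -1, 0, 0;
     0, 0, -1, 0;
     0, 0, 0, -1]

/-- Membership in the proper orthochronous Lorentz group L₊↑. -/
def IsLorentz (Λ : Matrix (Fin 4) (Fin 4) ℝ) : Prop :=
  Λᵀ * eta * Λ = eta ∧ Λ.det = 1 ∧ 0 < Λ 0 0

/-- The standard wedge W₀ = {x : |x₀| < x₁}. -/
def W0 : Set (Fin 4 → ℝ) := {x | |x 0| < x 1}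

/-- The standard boost Λ₀(t). -/
def boost (t : ℝ) (x : Fin 4 → ℝ) : Fin 4 → ℝ :=
  ![x 0 * Real.cosh t + x 1 * Real.sinh t,
    x 0 * Real.sinh t + x 1 * Real.cosh t,
    x 2, x 3]

/-- The reflection j₀ about the edge of the standard wedge. -/
def j0 (x : Fin 4 → ℝ) : Fin 4 → ℝ := ![-x 0, -x 1, x 2, x 3]

/-- helper: if l*c + d > 0 for all l > 0 then c ≥ 0 and d ≥ 0. -/
lemma lin_pos {c d : ℝ} (h : ∀ l : ℝ, 0 < l → 0 < l * c + d) : 0 ≤ c ∧ 0 ≤ d := by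
  have hc : 0 ≤ c := by
    by_contra hc
    push_neg at hc
    have hl : 0 < (|d| + 1) / (-c) := by
      apply div_pos (by positivity) (by linarith)
    have h2 := h _ hl
    have h3 : (|d| + 1) / (-c) * c = -(|d| + 1) := by
      have hcne : (-c) ≠ 0 := by linarith
      calc (|d| + 1) / (-c) * c = -((|d| + 1) / (-c) * (-c)) := by ring
        _ = -(|d| + 1) := by rw [div_mul_cancel₀ _ hcne]
    rw [h3] at h2
    have := le_abs_self d
    linarith
  refine ⟨hc, ?_⟩
  by_contra hd
  push_neg at hd
  have hl : 0 < (-d) / (2 * (c + 1)) := by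
    apply div_pos (by linarith) (by linarith)
  have h2 := h _ hl
  have h3 : (-d) / (2 * (c + 1)) * (2 * (c + 1)) = -d := by
    field_simp
  nlinarith [h2, h3, hl]

/-- helper: if c ≤ d + ε*K for all ε > 0 (K ≥ 0) then c ≤ d. -/
lemma le_of_eps {c d K : ℝ} (hK : 0 ≤ K) (h : ∀ ε : ℝ, 0 < ε → c ≤ d + ε * K) : c ≤ d := by
  by_contra hcd
  push_neg at hcd
  have hε : 0 < (c - d) / (2 * (K + 1)) := by
    apply div_pos (by linarith) (by linarith)
  have h2 := h _ hε
  have h3 : (c - d) / (2 * (K + 1)) * (2 * (K + 1)) = c - d := by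
    field_simp
  nlinarith [h2, h3, hε, hK]

/-- helper: if c ≤ ε for all ε > 0 then c ≤ 0. -/
lemma le_zero_of_eps {c : ℝ} (h : ∀ ε : ℝ, 0 < ε → c ≤ ε) : c ≤ 0 := by
  by_contra hc
  push_neg at hc
  have := h (c / 2) (by linarith)
  linarith

set_option maxHeartbeats 2000000 in

set_option maxHeartbeats 2000000 in
/-- If the Poincaré transformation g(x) = Λx + a maps W₀ onto itself, then a₀ = a₁ = 0,
Λ commutes with every standard boost and with the reflection j₀; consequently g commutes
with Λ₀(t) and with j₀ as affine maps of ℝ⁴. -/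
theorem stmt3 (Λ : Matrix (Fin 4) (Fin 4) ℝ) (hΛ : IsLorentz Λ) (a : Fin 4 → ℝ)
    (hg : (fun x => Λ.mulVec x + a) '' W0 = W0) :
    a 0 = 0 ∧ a 1 = 0 ∧
    (∀ t : ℝ, Λ.mulVec ∘ boost t = boost t ∘ Λ.mulVec) ∧
    (Λ.mulVec ∘ j0 = j0 ∘ Λ.mulVec) ∧
    (∀ t : ℝ, (fun x => Λ.mulVec x + a) ∘ boost t = boost t ∘ (fun x => Λ.mulVec x + a)) ∧
    ((fun x => Λ.mulVec x + a) ∘ j0 = j0 ∘ (fun x => Λ.mulVec x + a)) := by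
  obtain ⟨hQ, hdet, h00⟩ := hΛ
  -- Minkowski form preserved
  have hmink : ∀ x y, mink (Λ.mulVec x) (Λ.mulVec y) = mink x y := by
    intro x y
    have h1 : ∀ u v : Fin 4 → ℝ, mink u v = u ⬝ᵥ eta.mulVec v := by
      intro u v
      simp [mink, eta, dotProduct, mulVec, Fin.sum_univ_four, Matrix.vecHead, Matrix.vecTail]
      ring
    rw [h1, h1, mulVec_mulVec, dotProduct_mulVec, vecMul_mulVec,
      ← Matrix.mul_assoc, hQ, ← dotProduct_mulVec]
  -- forward and backward maps
  have hfwd : ∀ x ∈ W0, Λ.mulVec x + a ∈ W0 := by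
    intro x hx
    rw [← hg]
    exact ⟨x, hx, rfl⟩
  have hbwd : ∀ y ∈ W0, ∃ x ∈ W0, Λ.mulVec x + a = y := by
    intro y hy
    rw [← hg] at hy
    obtain ⟨x, hx, he⟩ := hy
    exact ⟨x, hx, he⟩
  -- Step 1 : a 0 = 0 and a 1 = 0
  have key : ∀ ε : ℝ, 0 < ε → (0 ≤ ε - a 1 - a 0 ∧ 0 ≤ a 1 + a 0) ∧
      (0 ≤ ε - a 1 + a 0 ∧ 0 ≤ a 1 - a 0) := by
    intro ε hε
    have hxε : (![0, ε, 0, 0] : Fin 4 → ℝ) ∈ W0 := by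
      simp [W0, abs_of_nonneg, hε]
    obtain ⟨z, hz, hze⟩ := hbwd _ hxε
    have hz0 : (Λ.mulVec z) 0 = -a 0 := by
      have := congrFun hze 0
      simp only [Pi.add_apply] at this
      simp only [Matrix.cons_val_zero] at this
      linarith
    have hz1 : (Λ.mulVec z) 1 = ε - a 1 := by
      have := congrFun hze 1
      simp only [Pi.add_apply] at this
      simp only [Matrix.cons_val_one, Matrix.head_cons, Matrix.cons_val_zero] at this
      linarith
    have hmem : ∀ l : ℝ, 0 < l → |l * (-a 0) + a 0| < l * (ε - a 1) + a 1 := by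
      intro l hl
      have hlz : l • z ∈ W0 := by
        simp only [W0, Set.mem_setOf_eq, Pi.smul_apply, smul_eq_mul] at hz ⊢
        rw [abs_mul, abs_of_pos hl]
        exact mul_lt_mul_of_pos_left hz hl
      have hp := hfwd _ hlz
      simp only [W0, Set.mem_setOf_eq, Pi.add_apply, Matrix.mulVec_smul, Pi.smul_apply,
        smul_eq_mul, hz0, hz1] at hp
      exact hp
    constructor
    · apply lin_pos
      intro l hl
      have h2 := (abs_lt.mp (hmem l hl)).1
      nlinarith [h2]
    · apply lin_pos
      intro l hl
      have h2 := (abs_lt.mp (hmem l hl)).2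
      nlinarith [h2]
  have ha0 : a 0 = 0 ∧ a 1 = 0 := by
    have h1 : 0 ≤ a 1 + a 0 := ((key 1 one_pos).1).2
    have h2 : 0 ≤ a 1 - a 0 := ((key 1 one_pos).2).2
    have h3 : a 1 + a 0 ≤ 0 := by
      apply le_zero_of_eps
      intro ε hε
      have := ((key ε hε).1).1
      linarith
    have h4 : a 1 - a 0 ≤ 0 := by
      apply le_zero_of_eps
      intro ε hε
      have := ((key ε hε).2).1
      linarith
    constructor <;> linarith
  obtain ⟨ha0', ha1'⟩ := ha0
  -- Λ maps W0 into W0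
  have hW : ∀ x ∈ W0, Λ.mulVec x ∈ W0 := by
    intro x hx
    have := hfwd x hx
    simp only [W0, Set.mem_setOf_eq, Pi.add_apply, ha0', ha1', add_zero] at this ⊢
    exact this
  -- eta * eta = 1
  have hee : eta * eta = 1 := by
    ext i j
    fin_cases i <;> fin_cases j <;>
      simp [eta, Matrix.mul_apply, Fin.sum_univ_four, Matrix.one_apply,
        Matrix.vecHead, Matrix.vecTail]
  -- the row identity
  have h5 : Λ * eta * Λᵀ = eta := by
    have h3 : (eta * (Λᵀ * eta)) * Λ = 1 := by
      rw [Matrix.mul_assoc, hQ, hee]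
    have h4 : Λ * (eta * (Λᵀ * eta)) = 1 := mul_eq_one_comm.mp h3
    have h6 : Λ * eta * Λᵀ * (eta * eta) = Λ * (eta * (Λᵀ * eta)) * eta := by
      simp only [Matrix.mul_assoc]
    rw [hee, Matrix.mul_one, h4, Matrix.one_mul] at h6
    exact h6
  have hrow : Λ 0 0 * Λ 0 0 - Λ 0 1 * Λ 0 1 - Λ 0 2 * Λ 0 2 - Λ 0 3 * Λ 0 3 = 1 := by
    have := congrFun (congrFun h5 0) 0
    simp [Matrix.mul_apply, eta, Matrix.transpose_apply, Fin.sum_univ_four,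
      Matrix.vecHead, Matrix.vecTail] at this
    linarith
  have hy0pos : 0 < Λ 0 0 + Λ 0 1 := by
    nlinarith [hrow, h00, sq_nonneg (Λ 0 2), sq_nonneg (Λ 0 3), sq_nonneg (Λ 0 0 + Λ 0 1)]
  have hz0neg : -Λ 0 0 + Λ 0 1 < 0 := by
    nlinarith [hrow, h00, sq_nonneg (Λ 0 2), sq_nonneg (Λ 0 3), sq_nonneg (Λ 0 0 - Λ 0 1)]
  have hmv : ∀ (b c : ℝ) (i : Fin 4), (Λ.mulVec ![b, c, 0, 0]) i = b * Λ i 0 + c * Λ i 1 := by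
    intro b c i
    simp [mulVec, dotProduct, Fin.sum_univ_four, Matrix.vecHead, Matrix.vecTail]
    ring
  -- closure bound : |(Λ u)₀| ≤ (Λ u)₁ for u = (b,1,0,0), |b| = 1
  have hcl : ∀ b : ℝ, |b| = 1 → |b * Λ 0 0 + Λ 0 1| ≤ b * Λ 1 0 + Λ 1 1 := by
    intro b hb
    apply le_of_eps (K := |Λ 0 1| + |Λ 1 1|) (by positivity)
    intro ε hε
    have hx : (![b, 1 + ε, 0, 0] : Fin 4 → ℝ) ∈ W0 := by
      simp only [W0, Set.mem_setOf_eq, Matrix.cons_val_zero, Matrix.cons_val_one,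
        Matrix.head_cons, hb]
      linarith
    have hm := hW _ hx
    simp only [W0, Set.mem_setOf_eq] at hm
    have hv0 : (Λ.mulVec ![b, 1 + ε, 0, 0]) 0 = b * Λ 0 0 + Λ 0 1 + ε * Λ 0 1 := by
      simp [mulVec, dotProduct, Fin.sum_univ_four, Matrix.vecHead, Matrix.vecTail]
      ring
    have hv1 : (Λ.mulVec ![b, 1 + ε, 0, 0]) 1 = b * Λ 1 0 + Λ 1 1 + ε * Λ 1 1 := by
      simp [mulVec, dotProduct, Fin.sum_univ_four, Matrix.vecHead, Matrix.vecTail]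
      ring
    rw [hv0, hv1] at hm
    have habs : |b * Λ 0 0 + Λ 0 1| ≤ |b * Λ 0 0 + Λ 0 1 + ε * Λ 0 1| + |ε * Λ 0 1| := by
      have h := abs_add_le (b * Λ 0 0 + Λ 0 1 + ε * Λ 0 1) (-(ε * Λ 0 1))
      rw [abs_neg] at h
      have e : b * Λ 0 0 + Λ 0 1 + ε * Λ 0 1 + -(ε * Λ 0 1) = b * Λ 0 0 + Λ 0 1 := by ring
      rw [e] at h
      exact h
    have h1 : |ε * Λ 0 1| = ε * |Λ 0 1| := by rw [abs_mul, abs_of_pos hε]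
    have h2 : ε * Λ 1 1 ≤ ε * |Λ 1 1| :=
      mul_le_mul_of_nonneg_left (le_abs_self _) (le_of_lt hε)
    rw [h1] at habs
    nlinarith [habs, hm, h2]
  -- a lightlike image in the closed wedge lies on the boundary rays
  have hlight : ∀ b : ℝ, |b| = 1 →
      (b * Λ 1 0 + Λ 1 1 = |b * Λ 0 0 + Λ 0 1|) ∧ (b * Λ 2 0 + Λ 2 1 = 0) ∧
      (b * Λ 3 0 + Λ 3 1 = 0) := by
    intro b hb
    have hb2 : b * b = 1 := by
      have h := abs_mul_abs_self b
      rw [hb] at h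
      linarith
    have hL : mink (Λ.mulVec ![b, 1, 0, 0]) (Λ.mulVec ![b, 1, 0, 0]) =
        (b * Λ 0 0 + Λ 0 1) * (b * Λ 0 0 + Λ 0 1)
        - (b * Λ 1 0 + Λ 1 1) * (b * Λ 1 0 + Λ 1 1)
        - (b * Λ 2 0 + Λ 2 1) * (b * Λ 2 0 + Λ 2 1)
        - (b * Λ 3 0 + Λ 3 1) * (b * Λ 3 0 + Λ 3 1) := by
      simp only [mink, hmv]
      ring
    have hR : mink ![b, 1, 0, 0] ![b, 1, 0, 0] = b * b - 1 := by
      simp [mink, Matrix.vecHead, Matrix.vecTail]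
    have hnull := hmink ![b, 1, 0, 0] ![b, 1, 0, 0]
    rw [hL, hR, hb2] at hnull
    have hcl' := hcl b hb
    have habs : 0 ≤ |b * Λ 0 0 + Λ 0 1| := abs_nonneg _
    have hsq : (b * Λ 0 0 + Λ 0 1) * (b * Λ 0 0 + Λ 0 1) =
        |b * Λ 0 0 + Λ 0 1| * |b * Λ 0 0 + Λ 0 1| := (abs_mul_abs_self _).symm
    have h1 : b * Λ 1 0 + Λ 1 1 = |b * Λ 0 0 + Λ 0 1| := by
      apply le_antisymm _ hcl'
      nlinarith [hnull, hsq, hcl', habs, mul_self_nonneg (b * Λ 2 0 + Λ 2 1),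
        mul_self_nonneg (b * Λ 3 0 + Λ 3 1)]
    refine ⟨h1, ?_, ?_⟩
    · have h22 : (b * Λ 2 0 + Λ 2 1) * (b * Λ 2 0 + Λ 2 1) ≤ 0 := by
        nlinarith [hnull, h1, hsq, mul_self_nonneg (b * Λ 3 0 + Λ 3 1)]
      exact mul_self_eq_zero.mp (le_antisymm h22 (mul_self_nonneg _))
    · have h33 : (b * Λ 3 0 + Λ 3 1) * (b * Λ 3 0 + Λ 3 1) ≤ 0 := by
        nlinarith [hnull, h1, hsq, mul_self_nonneg (b * Λ 2 0 + Λ 2 1)]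
      exact mul_self_eq_zero.mp (le_antisymm h33 (mul_self_nonneg _))
  obtain ⟨hP1, hP2, hP3⟩ := hlight 1 (by norm_num)
  obtain ⟨hN1, hN2, hN3⟩ := hlight (-1) (by norm_num)
  rw [one_mul, one_mul, abs_of_pos hy0pos] at hP1
  rw [one_mul] at hP2 hP3
  have hzn : (-1 : ℝ) * Λ 0 0 + Λ 0 1 < 0 := by linarith
  rw [abs_of_neg hzn] at hN1
  -- entry equations
  have e20 : Λ 2 0 = 0 := by linarith
  have e21 : Λ 2 1 = 0 := by linarith
  have e30 : Λ 3 0 = 0 := by linarith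
  have e31 : Λ 3 1 = 0 := by linarith
  have d1 : Λ 1 1 = Λ 0 0 := by linarith
  have d2 : Λ 1 0 = Λ 0 1 := by linarith
  -- columns 2 and 3
  have hmv2 : ∀ i : Fin 4, (Λ.mulVec ![0, 0, 1, 0]) i = Λ i 2 := by
    intro i
    simp [mulVec, dotProduct, Fin.sum_univ_four, Matrix.vecHead, Matrix.vecTail]
  have hmv3 : ∀ i : Fin 4, (Λ.mulVec ![0, 0, 0, 1]) i = Λ i 3 := by
    intro i
    simp [mulVec, dotProduct, Fin.sum_univ_four, Matrix.vecHead, Matrix.vecTail]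
  have hcolgen : ∀ k : Fin 4, (∀ b : ℝ, |b| = 1 →
      Λ 0 k * (b * Λ 0 0 + Λ 0 1) - Λ 1 k * (b * Λ 1 0 + Λ 1 1)
      - Λ 2 k * (b * Λ 2 0 + Λ 2 1) - Λ 3 k * (b * Λ 3 0 + Λ 3 1) = 0) →
      Λ 0 k = 0 ∧ Λ 1 k = 0 := by
    intro k hq
    have q1 := hq 1 (by norm_num)
    have q2 := hq (-1) (by norm_num)
    rw [d1, d2, e20, e21, e30, e31] at q1 q2
    have g1 : (Λ 0 k - Λ 1 k) * (Λ 0 0 + Λ 0 1) = 0 := by linear_combination q1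
    have g2 : (Λ 0 k + Λ 1 k) * (Λ 0 0 - Λ 0 1) = 0 := by linear_combination -q2
    have g1' : Λ 0 k - Λ 1 k = 0 := by
      rcases mul_eq_zero.mp g1 with h | h
      · exact h
      · linarith
    have g2' : Λ 0 k + Λ 1 k = 0 := by
      rcases mul_eq_zero.mp g2 with h | h
      · exact h
      · linarith
    constructor <;> linarith
  have hc2 : Λ 0 2 = 0 ∧ Λ 1 2 = 0 := by
    apply hcolgen 2
    intro b hb
    have q := hmink ![0, 0, 1, 0] ![b, 1, 0, 0]
    simp only [mink, hmv2, hmv] at q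
    norm_num [Matrix.vecHead, Matrix.vecTail] at q
    simp [Matrix.cons_val_two, Matrix.cons_val_three] at q
    linear_combination q
  have hc3 : Λ 0 3 = 0 ∧ Λ 1 3 = 0 := by
    apply hcolgen 3
    intro b hb
    have q := hmink ![0, 0, 0, 1] ![b, 1, 0, 0]
    simp only [mink, hmv3, hmv] at q
    norm_num [Matrix.vecHead, Matrix.vecTail] at q
    simp [Matrix.cons_val_two, Matrix.cons_val_three] at q
    linear_combination q
  obtain ⟨e02, e12⟩ := hc2
  obtain ⟨e03, e13⟩ := hc3
  -- final assembly
  refine ⟨ha0', ha1', ?_, ?_, ?_, ?_⟩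
  · intro t
    funext x
    funext i
    fin_cases i <;>
      simp [Function.comp, boost, mulVec, dotProduct, Fin.sum_univ_four,
        Matrix.vecHead, Matrix.vecTail, e20, e21, e30, e31, e02, e12, e03, e13, d1, d2] <;>
      ring
  · funext x
    funext i
    fin_cases i <;>
      simp [Function.comp, j0, mulVec, dotProduct, Fin.sum_univ_four,
        Matrix.vecHead, Matrix.vecTail, e20, e21, e30, e31, e02, e12, e03, e13, d1, d2] <;>
      ring
  · intro t
    funext x
    funext i
    fin_cases i <;>
      simp [Function.comp, boost, mulVec, dotProduct, Fin.sum_univ_four, Pi.add_apply,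
        Matrix.vecHead, Matrix.vecTail, e20, e21, e30, e31, e02, e12, e03, e13, d1, d2,
        ha0', ha1'] <;>
      ring
  · funext x
    funext i
    fin_cases i <;>
      simp [Function.comp, j0, mulVec, dotProduct, Fin.sum_univ_four, Pi.add_apply,
        Matrix.vecHead, Matrix.vecTail, e20, e21, e30, e31, e02, e12, e03, e13, d1, d2,
        ha0', ha1'] <;>
      ring
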